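/- Let k ≥ 1 and let e_{−1}, e_0, …, e_{k−1} ∈ Σ_p(D) (not necessarily distinct) be such that V(e_i, e_{i−1}) ≠ ∅ for all 0 ≤ i ≤ k−1. Then for every choice of V_i = (v_{i,d})_{d∈D} ∈ V(e_i, e_{i−1}) (0 ≤ i ≤ k−1), there exist r ≥ k and a minimal U = (u_d) ∈ E_{D,p}(r) such that for every d ∈ D the remainder of u_d upon division by p^k equals Σ_{i=0}^{k−1} p^i·v_{i,d}, and such that φ_U(r−1−j) = e_j for all −1 ≤ j ≤ k−1 (indices taken in ℤ/rℤ). -/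

import Mathlib

open scoped BigOperators
open scoped Classical

/-- `sp p u` is the sum of the base-`p` digits of `u`. -/
def sp (p u : ℕ) : ℕ := (Nat.digits p u).sum

variable {ι : Type} [Fintype ι]

/-- The coordinatewise sum `Σ_{d ∈ D} u_d · d`. -/
def sigmaSum (D : Finset (ι → ℕ)) (U : D → ℕ) (k : ι) : ℕ :=
  ∑ d, U d * (d : ι → ℕ) k

/-- Membership in the set `E_{D,p}(r)`. -/
def memE (p : ℕ) (D : Finset (ι → ℕ)) (r : ℕ) (U : D → ℕ) : Prop :=
  (∀ d, U d ≤ p ^ r - 1) ∧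
  (∀ k, (p ^ r - 1) ∣ sigmaSum D U k ∧ 0 < sigmaSum D U k)

/-- The `p`-weight `s_p(U)` of a tuple `U`. -/
def spU (p : ℕ) (D : Finset (ι → ℕ)) (U : D → ℕ) : ℕ := ∑ d, sp p (U d)

/-- `s_{D,p}(r)`, the minimal `p`-weight of an element of `E_{D,p}(r)`. -/
noncomputable def sDp (p : ℕ) (D : Finset (ι → ℕ)) (r : ℕ) : ℕ :=
  sInf { s | ∃ U : D → ℕ, memE p D r U ∧ spU p D U = s }

/-- The `p`-density `δ_p(D)` of the set `D`. -/
noncomputable def density (p : ℕ) (D : Finset (ι → ℕ)) : ℝ :=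
  (1 / ((p : ℝ) - 1)) * sInf { x : ℝ | ∃ r : ℕ, 1 ≤ r ∧ x = (sDp p D r : ℝ) / (r : ℝ) }

/-- A minimal solution in `E_{D,p}(r)`. -/
def minimalSol (p : ℕ) (D : Finset (ι → ℕ)) (r : ℕ) (U : D → ℕ) : Prop :=
  memE p D r U ∧ (spU p D U : ℝ) = ((p : ℝ) - 1) * (r : ℝ) * density p D

/-- `φ_r(U) = (1/(p^r − 1)) Σ_{d ∈ D} u_d · d`. -/
def phiMap (p : ℕ) (D : Finset (ι → ℕ)) (r : ℕ) (U : D → ℕ) (k : ι) : ℕ :=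
  sigmaSum D U k / (p ^ r - 1)

/-- The shift `δ_r` on `{0, …, p^r − 1}`. -/
def shiftFun (p r u : ℕ) : ℕ := if u = p ^ r - 1 then u else (p * u) % (p ^ r - 1)

/-- The componentwise action of the shift `δ_r` on tuples. -/
def shiftE (p : ℕ) (D : Finset (ι → ℕ)) (r : ℕ) (U : D → ℕ) : D → ℕ :=
  fun d => shiftFun p r (U d)

/-- The support `φ_U : ℤ/rℤ → ℕ^n` of a solution `U ∈ E_{D,p}(r)`. -/
def suppMap (p : ℕ) (D : Finset (ι → ℕ)) (r : ℕ) (U : D → ℕ) (k : ZMod r) : ι → ℕ :=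
  phiMap p D r ((shiftE p D r)^[k.val] U)

/-- Membership in `MI_{D,p}(r)`: minimal irreducible solutions. -/
def memMI (p : ℕ) (D : Finset (ι → ℕ)) (r : ℕ) (U : D → ℕ) : Prop :=
  minimalSol p D r U ∧ Function.Injective (suppMap p D r U)

/-- The `p`-minimal support `Σ_p(D)`. -/
def minSupport (p : ℕ) (D : Finset (ι → ℕ)) : Set (ι → ℕ) :=
  { e | ∃ r : ℕ, 1 ≤ r ∧ ∃ U : D → ℕ, memMI p D r U ∧ e ∈ Set.range (suppMap p D r U) }

/-- `ψ(U)`: the tuple of last base-`p` digits of `U`. -/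
def psiMap (p : ℕ) (D : Finset (ι → ℕ)) (U : D → ℕ) : D → ℕ := fun d => U d % p

/-- The set `V(e, e')` of digit tuples of minimal irreducible solutions with
`φ_U(−1) = e` and `φ_U(0) = e'`. -/
def Vset (p : ℕ) (D : Finset (ι → ℕ)) (e e' : ι → ℕ) : Set (D → ℕ) :=
  { v | ∃ r : ℕ, 1 ≤ r ∧ ∃ U : D → ℕ, memMI p D r U ∧
      suppMap p D r U (-1) = e ∧ suppMap p D r U 0 = e' ∧ psiMap p D U = v }

/-- The weight `w(V) = Σ_{d ∈ D} v_d`. -/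
def weightV (D : Finset (ι → ℕ)) (v : D → ℕ) : ℕ := ∑ d, v d


namespace GlueAux


lemma sp_add_mul {p : ℕ} (hp : 2 ≤ p) {a : ℕ} (q : ℕ) (ha : a < p) :
    sp p (a + p * q) = a + sp p q := by
  rcases Nat.eq_zero_or_pos (a + p * q) with h | h
  · have ha0 : a = 0 := by omega
    have hpq : p * q = 0 := by omega
    have hq0 : q = 0 := by
      rcases Nat.mul_eq_zero.mp hpq with h' | h' <;> omega
    subst ha0; subst hq0; simp [sp]
  · unfold sp
    rw [Nat.digits_def' (by omega : 1 < p) h]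
    have h1 : (a + p * q) % p = a := by
      rw [Nat.add_mul_mod_self_left, Nat.mod_eq_of_lt ha]
    have h2 : (a + p * q) / p = q := by
      rw [Nat.add_mul_div_left _ _ (by omega : 0 < p), Nat.div_eq_of_lt ha, Nat.zero_add]
    rw [h1, h2, List.sum_cons]

lemma sp_add_pow_mul {p : ℕ} (hp : 2 ≤ p) :
    ∀ (m x y : ℕ), x < p ^ m → sp p (x + p ^ m * y) = sp p x + sp p y := by
  intro m
  induction m with
  | zero =>
    intro x y hx
    have : x = 0 := by simpa using hx
    subst this
    simp [sp]
  | succ m ih =>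
    intro x y hx
    have hxd : x % p + p * (x / p) = x := Nat.mod_add_div x p
    have h1 : x + p ^ (m+1) * y = x % p + p * (x / p + p ^ m * y) := by
      rw [pow_succ]
      calc x + p ^ m * p * y = (x % p + p * (x/p)) + p ^ m * p * y := by rw [hxd]
      _ = x % p + p * (x / p + p ^ m * y) := by ring
    have hxp : x / p < p ^ m := by
      apply Nat.div_lt_of_lt_mul
      calc x < p ^ (m+1) := hx
      _ = p ^ m * p := by rw [pow_succ]
      _ ≤ p * p ^ m := by rw [mul_comm]
    rw [h1, sp_add_mul hp _ (Nat.mod_lt _ (by omega)), ih _ _ hxp,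
      ← Nat.add_assoc]
    congr 1
    conv_rhs => rw [← hxd]
    rw [sp_add_mul hp _ (Nat.mod_lt _ (by omega))]



/-- `spw p r s u` is `δ_r^s(u)` in closed form. -/
def spw (p r s u : ℕ) : ℕ := if u = p ^ r - 1 then u else p ^ s * u % (p ^ r - 1)

lemma Mpos {p r : ℕ} (hp : 2 ≤ p) (hr : 1 ≤ r) : 0 < p ^ r - 1 := by
  have h1 : p ≤ p ^ r := Nat.le_self_pow (by omega) p
  omega

lemma spw_le {p r s u : ℕ} (hp : 2 ≤ p) (hr : 1 ≤ r) (hu : u ≤ p ^ r - 1) :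
    spw p r s u ≤ p ^ r - 1 := by
  unfold spw
  split
  · exact hu
  · exact le_of_lt (Nat.mod_lt _ (Mpos hp hr))

lemma spw_zero {p r u : ℕ} (hu : u ≤ p ^ r - 1) : spw p r 0 u = u := by
  unfold spw
  split
  · rfl
  · rw [pow_zero, one_mul, Nat.mod_eq_of_lt (by omega)]

lemma shiftFun_iter {p r : ℕ} (hp : 2 ≤ p) (hr : 1 ≤ r) :
    ∀ (s : ℕ) {u : ℕ}, u ≤ p ^ r - 1 → (shiftFun p r)^[s] u = spw p r s u := by
  intro s
  induction s with
  | zero => intro u hu; simp [spw_zero hu]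
  | succ s ih =>
    intro u hu
    rw [Function.iterate_succ_apply', ih hu]
    by_cases h : u = p ^ r - 1
    · simp [spw, h, shiftFun]
    · have hne : p ^ s * u % (p ^ r - 1) ≠ p ^ r - 1 :=
        Nat.ne_of_lt (Nat.mod_lt _ (Mpos hp hr))
      simp only [spw, if_neg h, shiftFun, if_neg hne]
      conv_lhs => rw [Nat.mul_mod, Nat.mod_mod_of_dvd _ (dvd_refl _)]
      rw [← Nat.mul_mod, ← mul_assoc, ← pow_succ']

lemma spw_top {p r s : ℕ} : spw p r s (p ^ r - 1) = p ^ r - 1 := by simp [spw]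

lemma spw_r {p r u : ℕ} (hp : 2 ≤ p) (hr : 1 ≤ r) (hu : u ≤ p ^ r - 1) :
    spw p r r u = u := by
  unfold spw
  split
  · rfl
  · rename_i h
    have h1 : 1 ≤ p ^ r := Nat.one_le_pow _ _ (by omega)
    obtain ⟨M, hM⟩ : ∃ M, p ^ r = M + 1 := ⟨p ^ r - 1, by omega⟩
    have hMeq : p ^ r - 1 = M := by omega
    rw [hMeq] at h ⊢
    rw [hM, add_mul, one_mul, Nat.mul_add_mod, Nat.mod_eq_of_lt (by omega)]

/-- The key carry identity for the shift. -/
lemma spw_carry {p r j u : ℕ} (hp : 2 ≤ p) (hj : j < r) (hu : u ≤ p ^ r - 1) :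
    p * spw p r (r - 1 - j) u = spw p r (r - j) u + (p ^ r - 1) * (u / p ^ j % p) := by
  have hA : 1 ≤ p ^ j := Nat.one_le_pow _ _ (by omega)
  by_cases h : u = p ^ r - 1
  · subst h
    rw [spw_top, spw_top]
    have hB : 1 ≤ p ^ (r - j) := Nat.one_le_pow _ _ (by omega)
    have hAB : p ^ j * p ^ (r - j) = p ^ r := by
      rw [← pow_add]; congr 1; omega
    have hle : p ^ j ≤ p ^ r := by
      calc p ^ j = p ^ j * 1 := (mul_one _).symm
      _ ≤ p ^ j * p ^ (r - j) := Nat.mul_le_mul_left _ hB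
      _ = p ^ r := hAB
    have hMdec : p ^ r - 1 = (p ^ j - 1) + p ^ j * (p ^ (r - j) - 1) := by
      have : p ^ j * (p ^ (r - j) - 1) = p ^ j * p ^ (r - j) - p ^ j := by rw [Nat.mul_sub, mul_one]
      omega
    have hdiv : (p ^ r - 1) / p ^ j = p ^ (r - j) - 1 := by
      rw [hMdec, Nat.add_mul_div_left _ _ (by omega : 0 < p ^ j),
        Nat.div_eq_of_lt (by omega), Nat.zero_add]
    have hC : p * p ^ (r - j - 1) = p ^ (r - j) := by
      rw [← pow_succ']; congr 1; omega
    have hc1 : 1 ≤ p ^ (r - j - 1) := Nat.one_le_pow _ _ (by omega)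
    have hple : p ≤ p ^ (r - j) := by
      calc p = p * 1 := (mul_one _).symm
      _ ≤ p * p ^ (r - j - 1) := Nat.mul_le_mul_left _ hc1
      _ = p ^ (r - j) := hC
    have hmod : (p ^ (r - j) - 1) % p = p - 1 := by
      have hdec2 : p ^ (r - j) - 1 = (p - 1) + p * (p ^ (r - j - 1) - 1) := by
        have : p * (p ^ (r - j - 1) - 1) = p * p ^ (r - j - 1) - p := by rw [Nat.mul_sub, mul_one]
        omega
      rw [hdec2, Nat.add_mul_mod_self_left, Nat.mod_eq_of_lt (by omega)]
    rw [hdiv, hmod]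
    obtain ⟨q, rfl⟩ : ∃ q, p = q + 1 := ⟨p - 1, by omega⟩
    have : q + 1 - 1 = q := by omega
    rw [this]
    ring
  · -- main case : u < p^r - 1
    have hu' : u < p ^ r - 1 := by omega
    obtain ⟨s, rfl⟩ : ∃ s, r = s + j + 1 := ⟨r - j - 1, by omega⟩
    have hs1 : s + j + 1 - 1 - j = s := by omega
    have hs2 : s + j + 1 - j = s + 1 := by omega
    rw [hs1, hs2]
    obtain ⟨M, hM⟩ : ∃ M, p ^ (s + j + 1) = M + 1 :=
      ⟨p ^ (s+j+1) - 1, by have : 1 ≤ p ^ (s+j+1) := Nat.one_le_pow _ _ (by omega); omega⟩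
    have hMeq : p ^ (s + j + 1) - 1 = M := by omega
    have huM : u < M := by omega
    set hi := u / p ^ (j + 1) with hhi
    set c := u / p ^ j % p with hc
    set lo := u % p ^ j with hlo
    have hcp : c < p := Nat.mod_lt _ (by omega)
    have hlop : lo < p ^ j := Nat.mod_lt _ (by omega)
    have hudec : u = p ^ (j+1) * hi + p ^ j * c + lo := by
      have d1 : u = p ^ j * (u / p ^ j) + lo := (Nat.div_add_mod u (p^j)).symm
      have d2 : u / p ^ j = p * (u / p ^ j / p) + c := (Nat.div_add_mod (u / p^j) p).symm
      have d3 : u / p ^ j / p = hi := by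
        rw [hhi, Nat.div_div_eq_div_mul, ← pow_succ]
      rw [d3] at d2
      calc u = p ^ j * (u / p ^ j) + lo := d1
      _ = p ^ j * (p * hi + c) + lo := by rw [← d2]
      _ = p ^ (j+1) * hi + p ^ j * c + lo := by rw [pow_succ]; ring
    set v := hi + c * p ^ (s + j) + lo * p ^ s with hv
    set v' := hi * p + c + lo * p ^ (s + 1) with hv'
    have hA1 : p ^ s * p ^ (j+1) = M + 1 := by
      rw [← pow_add, show s + (j+1) = s + j + 1 from by omega, hM]
    have hB1 : p ^ s * p ^ j = p ^ (s + j) := by rw [← pow_add]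
    have e1 : p ^ s * u = v + M * hi := by
      calc p ^ s * u = p ^ s * (p ^ (j+1) * hi + p ^ j * c + lo) := by rw [← hudec]
      _ = (p ^ s * p ^ (j+1)) * hi + (p ^ s * p ^ j) * c + p ^ s * lo := by ring
      _ = (M+1) * hi + p ^ (s+j) * c + p ^ s * lo := by rw [hA1, hB1]
      _ = v + M * hi := by rw [hv]; ring
    have hA2 : p ^ (s+1) * p ^ (j+1) = p * (M + 1) := by
      rw [← pow_add, show s + 1 + (j+1) = (s + j + 1) + 1 from by omega, pow_succ', hM]
    have hB2 : p ^ (s+1) * p ^ j = M + 1 := by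
      rw [← pow_add, show s + 1 + j = s + j + 1 from by omega, hM]
    have e2 : p ^ (s+1) * u = v' + M * (p * hi + c) := by
      calc p ^ (s+1) * u = p ^ (s+1) * (p ^ (j+1) * hi + p ^ j * c + lo) := by rw [← hudec]
      _ = (p ^ (s+1) * p ^ (j+1)) * hi + (p ^ (s+1) * p ^ j) * c + p ^ (s+1) * lo := by ring
      _ = (p * (M+1)) * hi + (M+1) * c + p ^ (s+1) * lo := by rw [hA2, hB2]
      _ = v' + M * (p * hi + c) := by rw [hv']; ring
    -- bounds
    have hb : c * p ^ j + lo < p ^ (j+1) := by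
      have h2 : p ^ (j+1) = p * p ^ j := by rw [pow_succ']
      have h3 : (c+1) * p ^ j ≤ p * p ^ j := Nat.mul_le_mul_right _ (by omega)
      have h4 : (c+1) * p ^ j = c * p ^ j + p ^ j := by ring
      omega
    have hC1 : p ^ (j+1) * p ^ (s+j) = p ^ j * (M+1) := by
      rw [← pow_add, show j + 1 + (s+j) = j + (s + j + 1) from by omega, pow_add, hM]
    have hC2 : p ^ (j+1) * p ^ s = M + 1 := by
      rw [← pow_add, show j + 1 + s = s + j + 1 from by omega, hM]
    have key1 : p ^ (j+1) * v = u + (c * p ^ j + lo) * M := by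
      calc p ^ (j+1) * v
          = hi * p ^ (j+1) + c * (p ^ (j+1) * p ^ (s+j)) + lo * (p ^ (j+1) * p ^ s) := by
            rw [hv]; ring
      _ = hi * p ^ (j+1) + c * (p ^ j * (M+1)) + lo * (M+1) := by rw [hC1, hC2]
      _ = (p ^ (j+1) * hi + p ^ j * c + lo) + (c * p ^ j + lo) * M := by ring
      _ = u + (c * p ^ j + lo) * M := by rw [← hudec]
    have hvM : v < M := by
      have h5 : p ^ (j+1) * v < p ^ (j+1) * M := by
        calc p ^ (j+1) * v = u + (c * p ^ j + lo) * M := key1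
        _ < M + (c * p ^ j + lo) * M := by omega
        _ = (c * p ^ j + lo + 1) * M := by ring
        _ ≤ p ^ (j+1) * M := Nat.mul_le_mul_right _ (by omega)
      exact lt_of_mul_lt_mul_left h5 (Nat.zero_le _)
    have hD1 : p ^ j * p ^ (s+1) = M + 1 := by
      rw [← pow_add, show j + (s+1) = s + j + 1 from by omega, hM]
    have key2 : p ^ j * v' = u + lo * M := by
      calc p ^ j * v'
          = (p ^ j * p) * hi + p ^ j * c + lo * (p ^ j * p ^ (s+1)) := by rw [hv']; ring
      _ = p ^ (j+1) * hi + p ^ j * c + lo * (M+1) := by rw [hD1, ← pow_succ]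
      _ = (p ^ (j+1) * hi + p ^ j * c + lo) + lo * M := by ring
      _ = u + lo * M := by rw [← hudec]
    have hv'M : v' < M := by
      have h5 : p ^ j * v' < p ^ j * M := by
        calc p ^ j * v' = u + lo * M := key2
        _ < M + lo * M := by omega
        _ = (lo + 1) * M := by ring
        _ ≤ p ^ j * M := Nat.mul_le_mul_right _ (by omega)
      exact lt_of_mul_lt_mul_left h5 (Nat.zero_le _)
    have s1 : spw p (s+j+1) s u = v := by
      unfold spw
      rw [if_neg h, hMeq, e1, Nat.add_mul_mod_self_left, Nat.mod_eq_of_lt hvM]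
    have s2 : spw p (s+j+1) (s+1) u = v' := by
      unfold spw
      rw [if_neg h, hMeq, e2, Nat.add_mul_mod_self_left, Nat.mod_eq_of_lt hv'M]
    rw [s1, s2, hMeq]
    -- final identity : p * v = v' + M * c
    have hE : p * p ^ (s + j) = p ^ (s+j+1) := by rw [← pow_succ']
    calc p * v = hi * p + c * (p * p ^ (s+j)) + lo * p ^ (s+1) := by rw [hv, pow_succ]; ring
    _ = hi * p + c * (M + 1) + lo * p ^ (s+1) := by rw [hE, hM]
    _ = v' + M * c := by rw [hv']; ring



/-- digit extraction from a truncation -/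
lemma digit_of_mod_pow {p u j k : ℕ} (hp : 2 ≤ p) (hjk : j < k) :
    u / p ^ j % p = (u % p ^ k) / p ^ j % p := by
  set lo := u % p ^ k with hlo
  set q := u / p ^ k with hq
  have hd : u = lo + p ^ j * (p ^ (k - j) * q) := by
    rw [← mul_assoc, ← pow_add, show j + (k - j) = k from by omega]
    rw [hlo, hq, Nat.mod_add_div]
  have h1 : u / p ^ j = lo / p ^ j + p ^ (k - j) * q := by
    conv_lhs => rw [hd]
    rw [Nat.add_mul_div_left _ _ (by positivity : 0 < p ^ j)]
  rw [h1, show p ^ (k - j) * q = p * (p ^ (k - j - 1) * q) from by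
    rw [← mul_assoc, ← pow_succ', show k - j - 1 + 1 = k - j from by omega],
    Nat.add_mul_mod_self_left]

/-- digit extraction from a digit sum -/
lemma digit_of_sum {p : ℕ} (hp : 2 ≤ p) :
    ∀ (j k : ℕ) (v : ℕ → ℕ), (∀ i, i < k → v i < p) → j < k →
      (∑ i ∈ Finset.range k, p ^ i * v i) / p ^ j % p = v j := by
  intro j
  induction j with
  | zero =>
    intro k v hv hjk
    obtain ⟨k', rfl⟩ : ∃ k', k = k' + 1 := ⟨k - 1, by omega⟩
    rw [Finset.sum_range_succ']
    simp only [pow_zero, one_mul, Nat.div_one]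
    have : ∀ i ∈ Finset.range k', p ^ (i+1) * v (i+1) = p * (p ^ i * v (i+1)) := by
      intro i _; rw [pow_succ']; ring
    rw [Finset.sum_congr rfl this, ← Finset.mul_sum, add_comm, Nat.add_mul_mod_self_left,
      Nat.mod_eq_of_lt (hv 0 (by omega))]
  | succ j ih =>
    intro k v hv hjk
    obtain ⟨k', rfl⟩ : ∃ k', k = k' + 1 := ⟨k - 1, by omega⟩
    rw [Finset.sum_range_succ']
    have hrw : ∀ i ∈ Finset.range k', p ^ (i+1) * v (i+1) = p * (p ^ i * v (i+1)) := by
      intro i _; rw [pow_succ']; ring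
    rw [Finset.sum_congr rfl hrw, ← Finset.mul_sum]
    simp only [pow_zero, one_mul]
    have hds : (p * (∑ i ∈ Finset.range k', p ^ i * v (i+1)) + v 0) / p
        = ∑ i ∈ Finset.range k', p ^ i * v (i+1) := by
      rw [Nat.mul_add_div (by omega : 0 < p), Nat.div_eq_of_lt (hv 0 (by omega))]
      omega
    rw [pow_succ', ← Nat.div_div_eq_div_mul, hds]
    exact ih k' (fun i => v (i+1)) (fun i hi => hv (i+1) (by omega)) (by omega)


end GlueAux
namespace GlueAux

variable {ι : Type} [Fintype ι]

lemma shiftE_iter {p r : ℕ} {D : Finset (ι → ℕ)} :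
    ∀ (s : ℕ) (U : D → ℕ), (shiftE p D r)^[s] U = fun d => (shiftFun p r)^[s] (U d) := by
  intro s
  induction s with
  | zero => intro U; rfl
  | succ s ih =>
    intro U
    rw [Function.iterate_succ_apply', ih U]
    funext d
    rw [Function.iterate_succ_apply']
    rfl

lemma suppMap_eq_spw {p r : ℕ} (hp : 2 ≤ p) (hr : 1 ≤ r) {D : Finset (ι → ℕ)}
    {U : D → ℕ} (hU : ∀ d, U d ≤ p ^ r - 1) (s : ℕ) :
    (shiftE p D r)^[s] U = fun d => spw p r s (U d) := by
  rw [shiftE_iter]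
  funext d
  exact shiftFun_iter hp hr s (hU d)

lemma sum_carry {p r j : ℕ} (hp : 2 ≤ p) (hj : j < r) {D : Finset (ι → ℕ)}
    (X : D → ℕ) (hX : ∀ d, X d ≤ p ^ r - 1) (m : ι) :
    p * ∑ d, spw p r (r - 1 - j) (X d) * (d : ι → ℕ) m
      = (∑ d, spw p r (r - j) (X d) * (d : ι → ℕ) m)
        + (p ^ r - 1) * ∑ d, (X d / p ^ j % p) * (d : ι → ℕ) m := by
  rw [Finset.mul_sum, Finset.mul_sum, ← Finset.sum_add_distrib]
  apply Finset.sum_congr rfl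
  intro d _
  have h := spw_carry (j := j) hp hj (hX d)
  calc p * (spw p r (r - 1 - j) (X d) * (d : ι → ℕ) m)
      = (p * spw p r (r - 1 - j) (X d)) * (d : ι → ℕ) m := by ring
  _ = (spw p r (r - j) (X d) + (p ^ r - 1) * (X d / p ^ j % p)) * (d : ι → ℕ) m := by rw [h]
  _ = spw p r (r - j) (X d) * (d : ι → ℕ) m
        + (p ^ r - 1) * ((X d / p ^ j % p) * (d : ι → ℕ) m) := by ring

lemma coprime_M {p r : ℕ} (hp : 2 ≤ p) (hr : 1 ≤ r) : Nat.Coprime (p ^ r - 1) p := by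
  have h1 : 1 ≤ p ^ r := Nat.one_le_pow _ _ (by omega)
  have h2 : Nat.Coprime (p ^ r - 1) (1 + (p ^ r - 1)) :=
    Nat.coprime_add_self_right.mpr (Nat.coprime_one_right _)
  have h3 : 1 + (p ^ r - 1) = p ^ r := by omega
  rw [h3] at h2
  exact (Nat.coprime_pow_right_iff (by omega) _ _).mp h2

/-- Everything we need from a member of `Vset`. -/
lemma extract {p : ℕ} (hp : 2 ≤ p) {D : Finset (ι → ℕ)}
    {ei ei' : ι → ℕ} {v : D → ℕ} (h : v ∈ Vset p D ei ei') :
    ∃ r : ℕ, 1 ≤ r ∧ ∃ U : D → ℕ,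
      (∀ d, U d ≤ p ^ r - 1) ∧
      (∀ m, sigmaSum D U m = (p ^ r - 1) * ei' m) ∧
      (∀ m, 0 < ei' m) ∧
      (∀ d, U d % p = v d) ∧
      (∀ m, p * ei m = ei' m + ∑ d, v d * (d : ι → ℕ) m) ∧
      ((spU p D U : ℝ) = ((p : ℝ) - 1) * r * density p D) := by
  obtain ⟨r, hr, U, ⟨⟨hE, hwt⟩, _⟩, hm1, hm0, hpsi⟩ := h
  haveI : NeZero r := ⟨by omega⟩
  have hM : 0 < p ^ r - 1 := Mpos hp hr
  have hUb : ∀ d, U d ≤ p ^ r - 1 := hE.1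
  have hpsi' : ∀ d, U d % p = v d := fun d => congrFun hpsi d
  -- φ(U) = ei'
  have hphi0 : phiMap p D r U = ei' := by
    rw [← hm0]
    unfold suppMap
    rw [ZMod.val_zero, Function.iterate_zero_apply]
  have hsum : ∀ m, sigmaSum D U m = (p ^ r - 1) * ei' m := by
    intro m
    have hdvd := (hE.2 m).1
    have := congrFun hphi0 m
    unfold phiMap at this
    exact Nat.eq_mul_of_div_eq_right hdvd this
  have hpos : ∀ m, 0 < ei' m := by
    intro m
    have h2 := (hE.2 m).2
    have h3 := hsum m
    by_contra hzero
    push_neg at hzero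
    interval_cases h4 : ei' m
    omega
  -- the identity  p * ei = ei' + Σ v_d d
  have hiter : (shiftE p D r)^[r-1] U = fun d => spw p r (r-1) (U d) :=
    suppMap_eq_spw hp hr hUb (r-1)
  have hphi1 : phiMap p D r (fun d => spw p r (r-1) (U d)) = ei := by
    rw [← hm1]
    unfold suppMap
    obtain ⟨n, rfl⟩ : ∃ n, r = n + 1 := ⟨r - 1, by omega⟩
    rw [ZMod.val_neg_one]
    rw [show n + 1 - 1 = n from by omega] at hiter ⊢
    rw [hiter]
  have hkey : ∀ m, p * ∑ d, spw p r (r-1) (U d) * (d : ι → ℕ) m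
      = (p ^ r - 1) * (ei' m + ∑ d, v d * (d : ι → ℕ) m) := by
    intro m
    have hc := sum_carry (j := 0) hp (by omega) U hUb m
    simp only [Nat.sub_zero] at hc
    have h1 : ∀ d : D, spw p r r (U d) = U d := fun d => spw_r hp hr (hUb d)
    have h2 : (∑ d, spw p r r (U d) * (d : ι → ℕ) m) = sigmaSum D U m := by
      unfold sigmaSum
      exact Finset.sum_congr rfl fun d _ => by rw [h1 d]
    have h3 : (∑ d, (U d / p ^ 0 % p) * (d : ι → ℕ) m) = ∑ d, v d * (d : ι → ℕ) m := by
      apply Finset.sum_congr rfl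
      intro d _
      rw [pow_zero, Nat.div_one, hpsi' d]
    rw [h2, h3, hsum m] at hc
    rw [hc]
    ring
  have hdvd1 : ∀ m, (p ^ r - 1) ∣ (∑ d, spw p r (r-1) (U d) * (d : ι → ℕ) m) := by
    intro m
    have h4 : (p ^ r - 1) ∣ p * ∑ d, spw p r (r-1) (U d) * (d : ι → ℕ) m := by
      rw [hkey m]; exact Dvd.intro _ rfl
    exact (Nat.Coprime.dvd_of_dvd_mul_left (coprime_M hp hr) h4)
  have hid : ∀ m, p * ei m = ei' m + ∑ d, v d * (d : ι → ℕ) m := by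
    intro m
    have h5 := congrFun hphi1 m
    unfold phiMap sigmaSum at h5
    have h6 : (∑ d, spw p r (r-1) (U d) * (d : ι → ℕ) m) = (p ^ r - 1) * ei m :=
      Nat.eq_mul_of_div_eq_right (hdvd1 m) h5
    have h7 := hkey m
    rw [h6] at h7
    have h8 : (p ^ r - 1) * (p * ei m) = (p ^ r - 1) * (ei' m + ∑ d, v d * (d : ι → ℕ) m) := by
      rw [← h7]; ring
    exact Nat.eq_of_mul_eq_mul_left hM h8
  exact ⟨r, hr, U, hUb, hsum, hpos, hpsi', hid, hwt⟩

end GlueAux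

/-- Given `e_{−1}, e_0, …, e_{k−1} ∈ Σ_p(D)` with all `V(e_i, e_{i−1})` nonempty,
and a choice `V_i ∈ V(e_i, e_{i−1})`, there exists a minimal solution `U` of some
length `r ≥ k` whose `k` lowest base-`p` digits are the `V_i` and whose support
ends with `e_{k−1}, …, e_0, e_{−1}`. -/
theorem glue_digits_exists (p : ℕ) (hp : p.Prime) {ι : Type} [Fintype ι] [Nonempty ι]
    (D : Finset (ι → ℕ)) (hD : D.Nonempty)
    (hcoord : ∀ k : ι, ∃ d ∈ D, 0 < d k)
    (k : ℕ) (hk : 1 ≤ k) (e : ℤ → (ι → ℕ))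
    (he : ∀ j : ℤ, -1 ≤ j → j ≤ (k : ℤ) - 1 → e j ∈ minSupport p D)
    (V : ℕ → (D → ℕ))
    (hV : ∀ i : ℕ, i < k → V i ∈ Vset p D (e (i : ℤ)) (e ((i : ℤ) - 1))) :
    ∃ r : ℕ, k ≤ r ∧ ∃ U : D → ℕ, minimalSol p D r U ∧
      (∀ d, U d % p ^ k = ∑ i ∈ Finset.range k, p ^ i * V i d) ∧
      (∀ j : ℤ, -1 ≤ j → j ≤ (k : ℤ) - 1 →
        suppMap p D r U (((r : ℤ) - 1 - j : ℤ) : ZMod r) = e j) := by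
  have hp2 : 2 ≤ p := hp.two_le
  have H : ∀ i : ℕ, i < k → ∃ r : ℕ, 1 ≤ r ∧ ∃ U : D → ℕ,
      (∀ d, U d ≤ p ^ r - 1) ∧
      (∀ m, sigmaSum D U m = (p ^ r - 1) * e ((i : ℤ) - 1) m) ∧
      (∀ m, 0 < e ((i : ℤ) - 1) m) ∧
      (∀ d, U d % p = V i d) ∧
      (∀ m, p * e (i : ℤ) m = e ((i : ℤ) - 1) m + ∑ d, V i d * (d : ι → ℕ) m) ∧
      ((spU p D U : ℝ) = ((p : ℝ) - 1) * r * density p D) :=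
    fun i hi => GlueAux.extract hp2 (hV i hi)
  choose! rr hrr UU hUb hUs hUpos hUpsi hUid hUmin using H
  have hVlt : ∀ i, i < k → ∀ d : D, V i d < p := by
    intro i hi d
    rw [← hUpsi i hi d]
    exact Nat.mod_lt _ (by omega)
  -- the inductive construction
  have main : ∀ t : ℕ, 1 ≤ t → t ≤ k → ∃ R : ℕ, t ≤ R ∧ ∃ W : D → ℕ,
      (∀ d, W d ≤ p ^ R - 1) ∧
      (∀ m, sigmaSum D W m = (p ^ R - 1) * e ((k : ℤ) - 1 - (t : ℕ)) m) ∧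
      (∀ d, W d % p ^ t = ∑ i ∈ Finset.range t, p ^ i * V (k - t + i) d) ∧
      ((spU p D W : ℝ) = ((p : ℝ) - 1) * R * density p D) := by
    intro t
    induction t with
    | zero => intro h; omega
    | succ t ih =>
      intro _ hle
      by_cases ht0 : t = 0
      · subst ht0
        have hklt : k - 1 < k := by omega
        refine ⟨rr (k-1), hrr _ hklt, UU (k-1), hUb _ hklt, ?_, ?_, ?_⟩
        · intro m
          have hthis := hUs (k-1) hklt m
          have hidx : ((k - 1 : ℕ) : ℤ) - 1 = (k : ℤ) - 1 - ((0 + 1 : ℕ) : ℤ) := by omega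
          rw [hidx] at hthis
          exact hthis
        · intro d
          rw [Finset.sum_range_one]
          simp only [show (0:ℕ)+1 = 1 from rfl, pow_one, pow_zero, one_mul, Nat.add_zero]
          exact hUpsi (k-1) hklt d
        · exact hUmin (k-1) hklt
      · have ht1 : 1 ≤ t := by omega
        obtain ⟨R, hR, W', hWb', hWs', hWd', hWm'⟩ := ih ht1 (by omega)
        set i0 := k - t - 1 with hi0
        have hi0k : i0 < k := by omega
        have hrB := hrr i0 hi0k
        set r := rr i0 with hrdef
        set U := UU i0 with hUdef
        have hUbB := hUb i0 hi0k
        refine ⟨R + r, by omega, fun d => U d % p + p * W' d + p ^ (R+1) * (U d / p),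
          ?_, ?_, ?_, ?_⟩
        · -- bound
          intro d
          simp only []
          have h1 : U d % p ≤ p - 1 := by
            have := Nat.mod_lt (U d) (show 0 < p by omega); omega
          have h2 : W' d ≤ p ^ R - 1 := hWb' d
          have hq : U d / p ≤ p ^ (r-1) - 1 := by
            have h3 : U d ≤ p ^ r - 1 := hUbB d
            have h3b : 1 ≤ p ^ r := Nat.one_le_pow _ _ (by omega)
            have h5 : U d / p < p ^ (r-1) := by
              apply Nat.div_lt_of_lt_mul
              calc U d < p ^ r := by omega
              _ = p ^ (r-1) * p := by rw [← pow_succ]; congr 1; omega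
              _ ≤ p * p ^ (r-1) := by rw [mul_comm]
            omega
          have c1 : p * W' d ≤ p * (p ^ R - 1) := Nat.mul_le_mul_left _ h2
          have c2 : p * (p ^ R - 1) = p * p ^ R - p := by rw [Nat.mul_sub, mul_one]
          have c3 : p ^ (R+1) * (U d / p) ≤ p ^ (R+1) * (p ^ (r-1) - 1) :=
            Nat.mul_le_mul_left _ hq
          have c4 : p ^ (R+1) * (p ^ (r-1) - 1) = p ^ (R+1) * p ^ (r-1) - p ^ (R+1) := by
            rw [Nat.mul_sub, mul_one]
          have c5 : p ^ (R+1) * p ^ (r-1) = p ^ (R+r) := by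
            rw [← pow_add]; congr 1; omega
          have c6 : p * p ^ R = p ^ (R+1) := by rw [← pow_succ']
          have c7 : p ^ (R+1) ≤ p ^ (R + r) := Nat.pow_le_pow_right (by omega) (by omega)
          have c8 : p ≤ p ^ (R+1) := by
            calc p = p ^ 1 := (pow_one p).symm
            _ ≤ p ^ (R+1) := Nat.pow_le_pow_right (by omega) (by omega)
          omega
        · -- the sum identity
          intro m
          have hidx1 : (k : ℤ) - 1 - ((t + 1 : ℕ) : ℤ) = ((i0 : ℕ) : ℤ) - 1 := by
            rw [hi0]; omega
          rw [hidx1]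
          have hidx2 : ((k : ℤ) - 1 - ((t : ℕ) : ℤ)) = ((i0 : ℕ) : ℤ) := by
            rw [hi0]; omega
          rw [hidx2] at hWs'
          have hexp : sigmaSum D (fun d => U d % p + p * W' d + p ^ (R+1) * (U d / p)) m
              = (∑ d, V i0 d * (d : ι → ℕ) m) + p * sigmaSum D W' m
                + p ^ (R+1) * (∑ d, (U d / p) * (d : ι → ℕ) m) := by
            unfold sigmaSum
            rw [Finset.mul_sum, Finset.mul_sum, ← Finset.sum_add_distrib,
              ← Finset.sum_add_distrib]
            apply Finset.sum_congr rfl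
            intro d _
            rw [← hUpsi i0 hi0k d]
            ring
          have hUdec : (∑ d, V i0 d * (d : ι → ℕ) m) + p * (∑ d, (U d / p) * (d : ι → ℕ) m)
              = sigmaSum D U m := by
            unfold sigmaSum
            rw [Finset.mul_sum, ← Finset.sum_add_distrib]
            apply Finset.sum_congr rfl
            intro d _
            rw [← hUpsi i0 hi0k d]
            have hmd : U d % p + p * (U d / p) = U d := Nat.mod_add_div _ _
            calc U d % p * (d : ι → ℕ) m + p * (U d / p * (d : ι → ℕ) m)
                = (U d % p + p * (U d / p)) * (d : ι → ℕ) m := by ring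
            _ = U d * (d : ι → ℕ) m := by rw [hmd]
          have hps : (1:ℕ) ≤ p ^ r := Nat.one_le_pow _ _ (by omega)
          have hpR : (1:ℕ) ≤ p ^ R := Nat.one_le_pow _ _ (by omega)
          have hpRr : (1:ℕ) ≤ p ^ (R+r) := Nat.one_le_pow _ _ (by omega)
          have hUsB := hUs i0 hi0k m
          have hIdB := hUid i0 hi0k m
          have hWsB := hWs' m
          rw [hexp]
          rw [← hrdef, ← hUdef] at hUsB
          zify [hps, hpR, hpRr] at hUsB hWsB hUdec hIdB ⊢
          linear_combination (p:ℤ) * hWsB + (p:ℤ)^R * hUsB + ((p:ℤ)^R - 1) * hIdB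
            + (p:ℤ)^R * hUdec
        · -- digits
          intro d
          simp only []
          have ha : U d % p < p := Nat.mod_lt _ (by omega)
          have hwlt : W' d % p ^ t < p ^ t := Nat.mod_lt _ (by positivity)
          have h1 : W' d = W' d % p ^ t + p ^ t * (W' d / p ^ t) := (Nat.mod_add_div _ _).symm
          have h2 : p ^ (t+1) * p ^ (R - t) = p ^ (R+1) := by
            rw [← pow_add]; congr 1; omega
          have h3 : p * p ^ t = p ^ (t+1) := by rw [← pow_succ']
          have hdec : U d % p + p * W' d + p ^ (R+1) * (U d / p)
              = (U d % p + p * (W' d % p ^ t))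
                + p ^ (t+1) * (W' d / p ^ t + p ^ (R - t) * (U d / p)) := by
            calc U d % p + p * W' d + p ^ (R+1) * (U d / p)
                = U d % p + p * (W' d % p ^ t + p ^ t * (W' d / p ^ t))
                  + (p ^ (t+1) * p ^ (R-t)) * (U d / p) := by rw [← h1, h2]
            _ = (U d % p + p * (W' d % p ^ t)) + (p * p ^ t) * (W' d / p ^ t)
                  + p ^ (t+1) * (p ^ (R-t) * (U d / p)) := by ring
            _ = (U d % p + p * (W' d % p ^ t)) + p ^ (t+1) * (W' d / p ^ t)
                  + p ^ (t+1) * (p ^ (R-t) * (U d / p)) := by rw [h3]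
            _ = (U d % p + p * (W' d % p ^ t))
                  + p ^ (t+1) * (W' d / p ^ t + p ^ (R-t) * (U d / p)) := by ring
          rw [hdec, Nat.add_mul_mod_self_left]
          have hlt : U d % p + p * (W' d % p ^ t) < p ^ (t+1) := by
            have d1 : p * (W' d % p ^ t + 1) ≤ p * p ^ t := Nat.mul_le_mul_left _ hwlt
            have d2 : p * (W' d % p ^ t + 1) = p * (W' d % p ^ t) + p := by ring
            omega
          rw [Nat.mod_eq_of_lt hlt]
          rw [Finset.sum_range_succ']
          simp only [pow_zero, one_mul]
          have hre : ∀ i ∈ Finset.range t,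
              p ^ (i+1) * V (k - (t+1) + (i+1)) d = p * (p ^ i * V (k - t + i) d) := by
            intro i _
            rw [show k - (t+1) + (i+1) = k - t + i from by omega, pow_succ']
            ring
          rw [Finset.sum_congr rfl hre, ← Finset.mul_sum, ← hWd' d]
          rw [show k - (t+1) + 0 = i0 from by omega]
          rw [← hUpsi i0 hi0k d, ← hUdef]
          omega
        · -- weight
          have hsp : ∀ d : D, sp p (U d % p + p * W' d + p ^ (R+1) * (U d / p))
              = sp p (U d) + sp p (W' d) := by
            intro d
            have ha : U d % p < p := Nat.mod_lt _ (by omega)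
            have h1 : U d % p + p * W' d + p ^ (R+1) * (U d / p)
                = U d % p + p * (W' d + p ^ R * (U d / p)) := by
              rw [show p ^ (R+1) = p * p ^ R from by rw [← pow_succ']]
              ring
            rw [h1, GlueAux.sp_add_mul hp2 _ ha]
            have h2 : W' d < p ^ R := by
              have e1 := hWb' d
              have e2 : (1:ℕ) ≤ p ^ R := Nat.one_le_pow _ _ (by omega)
              omega
            rw [GlueAux.sp_add_pow_mul hp2 R _ _ h2]
            have h3 : U d = U d % p + p * (U d / p) := (Nat.mod_add_div _ _).symm
            conv_rhs => rw [h3, GlueAux.sp_add_mul hp2 _ ha]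
            ring
          have hspU : spU p D (fun d => U d % p + p * W' d + p ^ (R+1) * (U d / p))
              = spU p D U + spU p D W' := by
            unfold spU
            rw [← Finset.sum_add_distrib]
            exact Finset.sum_congr rfl fun d _ => hsp d
          rw [hspU]
          push_cast
          rw [hUmin i0 hi0k, hWm']
          push_cast
          ring
  -- final assembly
  obtain ⟨R, hkR, W, hWb, hWs, hWd, hWm⟩ := main k hk le_rfl
  have hMR : 0 < p ^ R - 1 := GlueAux.Mpos hp2 (by omega)
  haveI : NeZero R := ⟨by omega⟩
  have hidxk : (k : ℤ) - 1 - ((k : ℕ) : ℤ) = -1 := by omega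
  rw [hidxk] at hWs
  simp only [Nat.sub_self, Nat.zero_add] at hWd
  have hdig : ∀ j, j < k → ∀ d : D, W d / p ^ j % p = V j d := by
    intro j hj d
    rw [GlueAux.digit_of_mod_pow hp2 hj, hWd d]
    exact GlueAux.digit_of_sum hp2 j k (fun i => V i d) (fun i hi => hVlt i hi d) hj
  have hpos1 : ∀ m, 0 < e (-1) m := by
    intro m
    have := hUpos 0 (by omega) m
    simpa using this
  have hmemE : memE p D R W := by
    refine ⟨hWb, fun m => ⟨?_, ?_⟩⟩
    · rw [hWs m]; exact dvd_mul_right _ _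
    · rw [hWs m]; exact Nat.mul_pos hMR (hpos1 m)
  -- the support chain
  have S : ∀ jn : ℕ, jn < k →
      ∀ m, (∑ d, GlueAux.spw p R (R - 1 - jn) (W d) * (d : ι → ℕ) m)
        = (p ^ R - 1) * e (jn : ℤ) m := by
    intro jn
    induction jn with
    | zero =>
      intro h0 m
      have hc := GlueAux.sum_carry (j := 0) hp2 (by omega) W hWb m
      simp only [Nat.sub_zero] at hc
      have h1 : (∑ d, GlueAux.spw p R R (W d) * (d : ι → ℕ) m) = sigmaSum D W m := by
        unfold sigmaSum
        exact Finset.sum_congr rfl fun d _ => by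
          rw [GlueAux.spw_r hp2 (by omega) (hWb d)]
      have h2 : (∑ d, (W d / p ^ 0 % p) * (d : ι → ℕ) m)
          = ∑ d, V 0 d * (d : ι → ℕ) m :=
        Finset.sum_congr rfl fun d _ => by rw [hdig 0 h0 d]
      rw [h1, h2, hWs m] at hc
      have hid := hUid 0 (by omega) m
      simp only [Nat.cast_zero, zero_sub] at hid
      apply Nat.eq_of_mul_eq_mul_left (show 0 < p by omega)
      simp only [Nat.sub_zero]
      rw [hc]
      have : (0 : ℕ) = ((0:ℕ) : ℤ) := by norm_num
      calc (p ^ R - 1) * e (-1) m + (p ^ R - 1) * ∑ d, V 0 d * (d : ι → ℕ) m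
          = (p ^ R - 1) * (e (-1) m + ∑ d, V 0 d * (d : ι → ℕ) m) := by ring
      _ = (p ^ R - 1) * (p * e 0 m) := by rw [← hid]
      _ = p * ((p ^ R - 1) * e ((0:ℕ) : ℤ) m) := by push_cast; ring
    | succ n ihn =>
      intro hnk m
      have hprev := ihn (by omega) m
      have hc := GlueAux.sum_carry (j := n+1) hp2 (by omega : n+1 < R) W hWb m
      rw [show R - (n+1) = R - 1 - n from by omega] at hc
      rw [hprev] at hc
      have h2 : (∑ d, (W d / p ^ (n+1) % p) * (d : ι → ℕ) m)
          = ∑ d, V (n+1) d * (d : ι → ℕ) m :=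
        Finset.sum_congr rfl fun d _ => by rw [hdig (n+1) hnk d]
      rw [h2] at hc
      have hid := hUid (n+1) hnk m
      have hidx : (((n+1 : ℕ)) : ℤ) - 1 = ((n : ℕ) : ℤ) := by push_cast; ring
      rw [hidx] at hid
      apply Nat.eq_of_mul_eq_mul_left (show 0 < p by omega)
      rw [hc]
      calc (p ^ R - 1) * e ((n:ℕ) : ℤ) m + (p ^ R - 1) * ∑ d, V (n+1) d * (d : ι → ℕ) m
          = (p ^ R - 1) * (e ((n:ℕ) : ℤ) m + ∑ d, V (n+1) d * (d : ι → ℕ) m) := by ring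
      _ = (p ^ R - 1) * (p * e ((n+1 : ℕ) : ℤ) m) := by rw [← hid]
      _ = p * ((p ^ R - 1) * e ((n+1 : ℕ) : ℤ) m) := by ring
  refine ⟨R, by omega, W, ⟨hmemE, hWm⟩, hWd, ?_⟩
  intro j hj1 hj2
  rcases eq_or_lt_of_le hj1 with hje | hjgt
  · -- j = -1
    rw [← hje]
    have h0 : ((R : ℤ) - 1 - (-1) : ℤ) = ((R : ℕ) : ℤ) := by ring
    rw [h0]
    have h1 : ((((R : ℕ) : ℤ)) : ZMod R) = 0 := by
      rw [Int.cast_natCast, ZMod.natCast_self]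
    rw [h1]
    unfold suppMap
    rw [ZMod.val_zero, Function.iterate_zero_apply]
    funext m
    unfold phiMap
    rw [hWs m, Nat.mul_div_cancel_left _ hMR]
  · -- 0 ≤ j
    lift j to ℕ using (by omega : (0:ℤ) ≤ j) with jn
    have hjnk : jn < k := by omega
    have hidx : ((R : ℤ) - 1 - (jn : ℕ)) = ((R - 1 - jn : ℕ) : ℤ) := by
      have : jn < R := by omega
      omega
    rw [hidx, Int.cast_natCast]
    unfold suppMap
    rw [ZMod.val_natCast, Nat.mod_eq_of_lt (by omega : R - 1 - jn < R)]
    rw [GlueAux.suppMap_eq_spw hp2 (by omega) hWb]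
    funext m
    unfold phiMap sigmaSum
    rw [S jn hjnk m, Nat.mul_div_cancel_left _ hMR]
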